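/- For ν > 0, as b → +∞, ∫₀^∞ t^{ν-1} e^{-t²/2 - bt} dt ~ Γ(ν)/b^ν. -/

import Mathlib

open MeasureTheory Real Set Filter

lemma integrableOn_aux {s b : ℝ} (hs : -1 < s) (hb : 0 < b) :
    IntegrableOn (fun t : ℝ => t ^ s * Real.exp (-(b * t))) (Ioi 0) := by
  have := integrableOn_rpow_mul_exp_neg_mul_rpow (p := 1) hs zero_lt_one hb
  refine this.congr_fun (fun t ht => ?_) measurableSet_Ioi
  dsimp only
  rw [Real.rpow_one]
  ring_nf

lemma key_bounds (ν : ℝ) (hν : 0 < ν) {b : ℝ} (hb : 0 < b) :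
    Real.Gamma ν / b ^ ν - Real.Gamma (ν + 2) / (2 * b ^ (ν + 2)) ≤
      (∫ t in Ioi (0 : ℝ), t ^ (ν - 1) * Real.exp (-t ^ 2 / 2 - b * t)) ∧
    (∫ t in Ioi (0 : ℝ), t ^ (ν - 1) * Real.exp (-t ^ 2 / 2 - b * t)) ≤
      Real.Gamma ν / b ^ ν := by
  set f : ℝ → ℝ := fun t => t ^ (ν - 1) * Real.exp (-t ^ 2 / 2 - b * t) with hf
  set h : ℝ → ℝ := fun t => t ^ (ν - 1) * Real.exp (-(b * t)) with hh
  set k : ℝ → ℝ := fun t => t ^ (ν + 1) / 2 * Real.exp (-(b * t)) with hk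
  have Ih : IntegrableOn h (Ioi 0) := integrableOn_aux (by linarith) hb
  have Ik : IntegrableOn k (Ioi 0) := by
    have h2 : IntegrableOn (fun t : ℝ => t ^ (ν + 1) * Real.exp (-(b * t)) / 2) (Ioi 0) :=
      (integrableOn_aux (s := ν + 1) (by linarith) hb).div_const 2
    refine h2.congr_fun (fun t ht => ?_) measurableSet_Ioi
    simp only [hk]; ring
  have hfh : ∀ t ∈ Ioi (0:ℝ), f t ≤ h t := by
    intro t ht
    have ht0 : (0:ℝ) < t := ht
    have : Real.exp (-t ^ 2 / 2 - b * t) ≤ Real.exp (-(b * t)) := by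
      apply Real.exp_le_exp.2; nlinarith
    exact mul_le_mul_of_nonneg_left this (Real.rpow_nonneg ht0.le _)
  have hlow : ∀ t ∈ Ioi (0:ℝ), h t - k t ≤ f t := by
    intro t ht
    have ht0 : (0:ℝ) < t := ht
    have hts : t ^ (ν - 1) * t ^ 2 = t ^ (ν + 1) := by
      rw [← Real.rpow_two, ← Real.rpow_add ht0]; ring_nf
    have hexp : 1 - t ^ 2 / 2 ≤ Real.exp (-t ^ 2 / 2) := by
      have := Real.add_one_le_exp (-t ^ 2 / 2); linarith
    have hsplit : f t = t ^ (ν - 1) * Real.exp (-(b * t)) * Real.exp (-t ^ 2 / 2) := by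
      rw [hf, mul_assoc, ← Real.exp_add]; ring_nf
    have hpos : 0 ≤ t ^ (ν - 1) * Real.exp (-(b * t)) :=
      mul_nonneg (Real.rpow_nonneg ht0.le _) (Real.exp_pos _).le
    calc h t - k t = t ^ (ν - 1) * Real.exp (-(b * t)) * (1 - t ^ 2 / 2) := by
          simp only [hh, hk]; rw [← hts]; ring
      _ ≤ t ^ (ν - 1) * Real.exp (-(b * t)) * Real.exp (-t ^ 2 / 2) :=
          mul_le_mul_of_nonneg_left hexp hpos
      _ = f t := hsplit.symm
  have If : IntegrableOn f (Ioi 0) := by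
    refine Ih.mono' ?_ ?_
    · apply Measurable.aestronglyMeasurable
      fun_prop
    · filter_upwards [ae_restrict_mem measurableSet_Ioi] with t ht
      have ht0 : (0:ℝ) < t := ht
      have h1 : 0 ≤ f t := mul_nonneg (Real.rpow_nonneg ht0.le _) (Real.exp_pos _).le
      rw [Real.norm_eq_abs, abs_of_nonneg h1]
      exact hfh t ht
  have Jval : ∫ t in Ioi (0:ℝ), h t = Real.Gamma ν / b ^ ν := by
    have h1 := Real.integral_rpow_mul_exp_neg_mul_Ioi hν hb
    rw [hh, h1, Real.div_rpow (by norm_num) hb.le, Real.one_rpow]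
    ring
  have Kval : ∫ t in Ioi (0:ℝ), k t = Real.Gamma (ν + 2) / (2 * b ^ (ν + 2)) := by
    have h2 := Real.integral_rpow_mul_exp_neg_mul_Ioi (a := ν + 2) (by linarith) hb
    have h3 : ∫ t in Ioi (0:ℝ), k t
        = (∫ t in Ioi (0:ℝ), t ^ (ν + 2 - 1) * Real.exp (-(b * t))) / 2 := by
      rw [← integral_div]
      refine setIntegral_congr_fun measurableSet_Ioi (fun t ht => ?_)
      simp only [hk]
      norm_num
      ring_nf
    rw [h3, h2, Real.div_rpow (by norm_num) hb.le, Real.one_rpow]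
    ring
  constructor
  · rw [← Jval, ← Kval, ← integral_sub Ih Ik]
    exact setIntegral_mono_on (Ih.sub Ik) If measurableSet_Ioi hlow
  · rw [← Jval]
    exact setIntegral_mono_on If Ih measurableSet_Ioi hfh

/-- For `ν > 0`, `∫₀^∞ t^{ν-1} exp (-t²/2 - b t) dt ~ Γ(ν) / b^ν` as `b → +∞`. -/
theorem integral_asymptotic_gamma (ν : ℝ) (hν : 0 < ν) :
    Tendsto
      (fun b : ℝ =>
        (∫ t in Ioi (0 : ℝ), t ^ (ν - 1) * Real.exp (-t ^ 2 / 2 - b * t)) /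
          (Real.Gamma ν / b ^ ν))
      atTop (nhds 1) := by
  set C : ℝ := Real.Gamma (ν + 2) / (2 * Real.Gamma ν) with hC
  have hΓ : 0 < Real.Gamma ν := Real.Gamma_pos_of_pos hν
  have hg : Tendsto (fun b : ℝ => 1 - C / b ^ 2) atTop (nhds 1) := by
    have h0 : Tendsto (fun b : ℝ => C / b ^ 2) atTop (nhds 0) :=
      Tendsto.div_atTop tendsto_const_nhds (tendsto_pow_atTop two_ne_zero)
    simpa using tendsto_const_nhds.sub h0
  refine tendsto_of_tendsto_of_tendsto_of_le_of_le' hg tendsto_const_nhds ?_ ?_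
  · filter_upwards [eventually_gt_atTop (0 : ℝ)] with b hb
    have hbν : (0:ℝ) < b ^ ν := Real.rpow_pos_of_pos hb _
    have hJpos : (0:ℝ) < Real.Gamma ν / b ^ ν := by positivity
    rw [le_div_iff₀ hJpos]
    have key := (key_bounds ν hν hb).1
    have hsplit : b ^ (ν + 2) = b ^ ν * b ^ 2 := by
      rw [Real.rpow_add hb, Real.rpow_two]
    have : (1 - C / b ^ 2) * (Real.Gamma ν / b ^ ν)
        = Real.Gamma ν / b ^ ν - Real.Gamma (ν + 2) / (2 * b ^ (ν + 2)) := by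
      rw [hC, hsplit]
      field_simp
    linarith
  · filter_upwards [eventually_gt_atTop (0 : ℝ)] with b hb
    have hbν : (0:ℝ) < b ^ ν := Real.rpow_pos_of_pos hb _
    have hJpos : (0:ℝ) < Real.Gamma ν / b ^ ν := by positivity
    rw [div_le_one hJpos]
    exact (key_bounds ν hν hb).2
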